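/- Let H ≤ G be finite groups each with a supercharacter theory, consistent in the sense that every superclass of H is contained in a superclass of G. Define the transition measure ρ_H^G(γ,χ) := (|H|/|G|)·(χ(1)/γ(1))·⟨SInd_H^G(γ),χ⟩/⟨χ,χ⟩ for γ ∈ SCh(H), χ ∈ SCh(G). Then for each χ ∈ SCh(G): Σ_{γ∈SCh(H)} ρ_H^G(γ,χ)·SPl_H(γ) = SPl_G(χ). -/

import Mathlib

open scoped BigOperators
open Finset Classical

/-- The Frobenius scalar product `⟨f,g⟩ = (1/|X|) Σ_x f(x) conj(g(x))`. -/
noncomputable def frob (X : Type*) [Fintype X] (f g : X → ℂ) : ℂ :=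
  (Fintype.card X : ℂ)⁻¹ * ∑ x : X, f x * (starRingEnd ℂ) (g x)

/-- Extension by zero of `γ : H → ℂ` to `G`. -/
noncomputable def extZero {G : Type*} [Group G] (H : Subgroup G) (γ : H → ℂ) : G → ℂ :=
  fun g => if h : g ∈ H then γ ⟨g, h⟩ else 0

/-- Superinduction: `SInd_H^G(γ)(g) = (|G|/(|H|·|[g]|)) Σ_{k∈[g]} γ⁰(k)`. -/
noncomputable def SInd {G : Type*} [Group G] [Fintype G] (H : Subgroup G)
    (cls : G → Finset G) (γ : H → ℂ) : G → ℂ :=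
  fun g => ((Fintype.card G : ℂ) / ((Nat.card H : ℂ) * ((cls g).card : ℂ))) *
    ∑ k ∈ cls g, extZero H γ k

/-- The transition measure
`ρ_H^G(γ,χ) = (|H|/|G|)·(χ(1)/γ(1))·⟨SInd_H^G(γ),χ⟩/⟨χ,χ⟩`. -/
noncomputable def transMeas {G : Type*} [Group G] [Fintype G] (H : Subgroup G)
    (cls : G → Finset G) (γ : H → ℂ) (χ : G → ℂ) : ℂ :=
  ((Nat.card H : ℂ) / (Fintype.card G : ℂ)) * (χ 1 / γ 1) *
    (frob G (SInd H cls γ) χ / frob G χ χ)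

/-- The superplancherel measure `SPl(χ) = (1/|X|)·χ(1)²/⟨χ,χ⟩` for a group `X`. -/
noncomputable def SPl (X : Type*) [Group X] [Fintype X] (χ : X → ℂ) : ℂ :=
  (Fintype.card X : ℂ)⁻¹ * (χ 1) ^ 2 / frob X χ χ

/-- for consistent supercharacter theories on `H ≤ G`, the transition
measure intertwines the superplancherel measures:
`Σ_{γ∈SCh(H)} ρ_H^G(γ,χ)·SPl_H(γ) = SPl_G(χ)` for each `χ ∈ SCh(G)`. -/
theorem stmt4 (G : Type*) [Group G] [Fintype G] (H : Subgroup G)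
    (cls : G → Finset G)
    (hmem : ∀ g : G, g ∈ cls g)
    (hcls : ∀ g h : G, h ∈ cls g → cls h = cls g)
    (SChG : Finset (G → ℂ)) (SChH : Finset (↥H → ℂ))
    (hdegG : ∀ χ ∈ SChG, χ 1 ≠ 0) (hdegH : ∀ γ ∈ SChH, γ 1 ≠ 0)
    (hnG : ∀ χ ∈ SChG, frob G χ χ ≠ 0) (hnH : ∀ γ ∈ SChH, frob (↥H) γ γ ≠ 0)
    -- Frobenius reciprocity for superinduction (may be assumed)
    (hrecip : ∀ γ ∈ SChH, ∀ χ ∈ SChG,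
      frob G (SInd H cls γ) χ = frob (↥H) γ (fun x : H => χ (x : G)))
    -- consistency: restrictions of supercharacters of `G` are superclass functions on
    -- `H`, hence expand in the supercharacters of `H`
    (hexp : ∀ χ ∈ SChG, (fun x : H => χ (x : G)) =
      ∑ γ ∈ SChH, (frob (↥H) γ (fun x : H => χ (x : G)) / frob (↥H) γ γ) • γ)
    (χ : G → ℂ) (hχ : χ ∈ SChG) :
    ∑ γ ∈ SChH, transMeas H cls γ χ * SPl (↥H) γ = SPl G χ := by
  have hχ1 : χ 1 ≠ 0 := hdegG χ hχ
  have hχn : frob G χ χ ≠ 0 := hnG χ hχ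
  have hexp1 : χ ((1 : ↥H) : G) =
      ∑ γ ∈ SChH, (frob (↥H) γ (fun x : H => χ (x : G)) / frob (↥H) γ γ) * γ 1 := by
    have := congrFun (hexp χ hχ) 1
    simpa [Finset.sum_apply] using this
  have key : ∀ γ ∈ SChH, transMeas H cls γ χ * SPl (↥H) γ =
      (Fintype.card G : ℂ)⁻¹ * χ 1 / frob G χ χ *
        ((frob (↥H) γ (fun x : H => χ (x : G)) / frob (↥H) γ γ) * γ 1) := by
    intro γ hγ
    have hγ1 : γ 1 ≠ 0 := hdegH γ hγ
    have hγn : frob (↥H) γ γ ≠ 0 := hnH γ hγ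
    have hcardH : (Fintype.card ↥H : ℂ) ≠ 0 := by
      exact_mod_cast Fintype.card_ne_zero
    have hcardG : (Fintype.card G : ℂ) ≠ 0 := by
      exact_mod_cast Fintype.card_ne_zero
    rw [transMeas, SPl, hrecip γ hγ χ hχ, Nat.card_eq_fintype_card]
    field_simp
  rw [Finset.sum_congr rfl key, ← Finset.mul_sum, ← hexp1]
  rw [SPl]
  have : χ ((1 : ↥H) : G) = χ 1 := by norm_num
  rw [this]
  field_simp
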